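/- For every positive integer n there exists a fair division instance with n agents, m = n^n goods, and monotone normalized valuations, in which μ_i^n(M) = 1 for every agent i, and such that every allocation with copies (A_1,…,A_n) satisfying v_i(A_i) ≥ μ_i^n(M) for all agents i has total number of copies Σ_i |A_i| − |⋃_i A_i| at least (n−1)^n = ((n−1)/n)^n · m, and moreover contains some good that belongs to all n bundles (i.e., is copied n−1 times). -/
import Mathlib

open Finset

noncomputable def mms {G : Type*} (v : Finset G → ℝ) (d : ℕ) (S : Finset G) : ℝ :=
  ⨆ P : G → Fin d, ⨅ j : Fin d, v (S.filter fun g => P g = j)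

section aux
variable (n : ℕ)

/-- The column of goods (functions) taking value `j` at coordinate `i`. -/
def col (i j : Fin n) : Finset (Fin n → Fin n) :=
  Finset.univ.filter fun g => g i = j

open scoped Classical in
/-- Agent `i`'s valuation. -/
noncomputable def myv (i : Fin n) (S : Finset (Fin n → Fin n)) : ℝ :=
  if ∃ j : Fin n, col n i j ⊆ S then 1 else 0

lemma myv_nonneg (i : Fin n) (S : Finset (Fin n → Fin n)) : 0 ≤ myv n i S := by
  unfold myv; split_ifs <;> norm_num

lemma myv_le_one (i : Fin n) (S : Finset (Fin n → Fin n)) : myv n i S ≤ 1 := by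
  unfold myv; split_ifs <;> norm_num

lemma myv_mono (i : Fin n) (S T : Finset (Fin n → Fin n)) (h : S ⊆ T) :
    myv n i S ≤ myv n i T := by
  unfold myv
  split_ifs with h1 h2
  · exact le_refl 1
  · exact absurd (h1.imp fun j hj => hj.trans h) h2
  · norm_num
  · exact le_refl 0

lemma mem_col (i j : Fin n) (g : Fin n → Fin n) : g ∈ col n i j ↔ g i = j := by
  simp [col]

lemma col_card (hn : 0 < n) (i j : Fin n) : (col n i j).card = n ^ (n - 1) := by
  classical
  have : col n i j = Fintype.piFinset (fun i' => if i' = i then {j} else Finset.univ) := by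
    ext g
    simp only [mem_col, Fintype.mem_piFinset]
    constructor
    · intro h i'
      split_ifs with h'
      · subst h'; simp [h]
      · simp
    · intro h
      have := h i
      simpa using this
  rw [this, Fintype.card_piFinset]
  have h2 : ∀ i' : Fin n, ((if i' = i then ({j} : Finset (Fin n)) else Finset.univ)).card
      = if i' = i then 1 else n := by
    intro i'; split_ifs <;> simp
  rw [Finset.prod_congr rfl fun i' _ => h2 i']
  rw [← Finset.mul_prod_erase Finset.univ _ (Finset.mem_univ i)]
  rw [if_pos rfl, one_mul]
  rw [Finset.prod_congr rfl (fun i' hi' => if_neg (Finset.ne_of_mem_erase hi'))]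
  rw [Finset.prod_const, Finset.card_erase_of_mem (Finset.mem_univ i)]
  simp

lemma zset_card (j : Fin n → Fin n) :
    (Finset.univ.filter fun g : Fin n → Fin n => ∀ i, g i ≠ j i).card = (n - 1) ^ n := by
  classical
  have : (Finset.univ.filter fun g : Fin n → Fin n => ∀ i, g i ≠ j i)
      = Fintype.piFinset (fun i => ({j i}ᶜ : Finset (Fin n))) := by
    ext g; simp [Fintype.mem_piFinset]
  rw [this, Fintype.card_piFinset]
  have : ∀ i : Fin n, (({j i}ᶜ : Finset (Fin n))).card = n - 1 := by
    intro i; rw [Finset.card_compl]; simp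
  rw [Finset.prod_congr rfl fun i _ => this i, Finset.prod_const]
  simp

lemma myv_mms (hn : 0 < n) (i : Fin n) : mms (myv n i) n Finset.univ = 1 := by
  classical
  have hne : Nonempty (Fin n) := ⟨⟨0, hn⟩⟩
  have hbb : ∀ P : (Fin n → Fin n) → Fin n, BddBelow (Set.range fun j : Fin n =>
      myv n i (Finset.univ.filter fun g => P g = j)) :=
    fun P => (Set.finite_range _).bddBelow
  have hba : BddAbove (Set.range fun P : (Fin n → Fin n) → Fin n =>
      ⨅ j : Fin n, myv n i (Finset.univ.filter fun g => P g = j)) :=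
    (Set.finite_range _).bddAbove
  apply le_antisymm
  · apply ciSup_le
    intro P
    exact le_trans (ciInf_le (hbb P) ⟨0, hn⟩) (myv_le_one n i _)
  · apply le_ciSup_of_le hba (fun g => g i)
    apply le_ciInf
    intro j
    have hsub : col n i j ⊆ Finset.univ.filter fun g => g i = j := by
      intro g hg
      simp only [Finset.mem_filter, Finset.mem_univ, true_and]
      exact (mem_col n i j g).1 hg
    have : myv n i (Finset.univ.filter fun g => g i = j) = 1 := by
      unfold myv
      exact if_pos ⟨j, hsub⟩
    exact this.ge

end aux

theorem stmt0 (n : ℕ) (hn : 0 < n) :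
    ∃ (G : Type) (_ : Fintype G) (_ : DecidableEq G) (v : Fin n → Finset G → ℝ),
      Fintype.card G = n ^ n ∧
      (∀ i, v i ∅ = 0) ∧
      (∀ i S, 0 ≤ v i S) ∧
      (∀ i S T, S ⊆ T → v i S ≤ v i T) ∧
      (∀ i, mms (v i) n Finset.univ = 1) ∧
      (∀ A : Fin n → Finset G,
        (∀ i, mms (v i) n Finset.univ ≤ v i (A i)) →
          (Finset.univ.biUnion A).card + (n - 1) ^ n ≤ ∑ i, (A i).card ∧
          ∃ g : G, ∀ i, g ∈ A i) := by
  classical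
  refine ⟨Fin n → Fin n, inferInstance, inferInstance, myv n, ?_, ?_, ?_, ?_, ?_, ?_⟩
  · simp
  · intro i
    unfold myv
    rw [if_neg]
    rintro ⟨j, hj⟩
    exact absurd (hj ((mem_col n i j _).2 rfl : (fun _ => j) ∈ col n i j)) (by simp)
  · exact myv_nonneg n
  · exact myv_mono n
  · exact myv_mms n hn
  · intro A hA
    -- extract columns
    have hcol : ∀ i, ∃ j, col n i j ⊆ A i := by
      intro i
      have h1 := (myv_mms n hn i) ▸ hA i
      by_contra hc
      rw [myv, if_neg hc] at h1
      norm_num at h1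
    choose j hj using hcol
    constructor
    · -- counting
      set U : Finset (Fin n → Fin n) := Finset.univ.biUnion A with hU
      set Z : Finset (Fin n → Fin n) := Finset.univ.filter (fun g : Fin n → Fin n => ∀ i, g i ≠ j i) with hZ
      have hcG : Fintype.card (Fin n → Fin n) = n ^ n := by simp
      -- c g and k g
      set c : (Fin n → Fin n) → ℕ := fun g => (Finset.univ.filter fun i => g ∈ A i).card with hc
      set k : (Fin n → Fin n) → ℕ := fun g => (Finset.univ.filter fun i => g i = j i).card with hk
      have hsum : ∑ i, (A i).card = ∑ g : Fin n → Fin n, c g := by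
        have : ∀ i, (A i).card = ∑ g : Fin n → Fin n, if g ∈ A i then 1 else 0 := by
          intro i
          rw [← Finset.card_filter]
          congr 1
          rw [Finset.filter_mem_eq_inter, Finset.univ_inter]
        rw [Finset.sum_congr rfl fun i _ => this i, Finset.sum_comm]
        exact Finset.sum_congr rfl fun g _ => (Finset.card_filter _ _).symm
      have hck : ∀ g : Fin n → Fin n, k g ≤ c g := by
        intro g
        apply Finset.card_le_card
        intro i hi
        simp only [Finset.mem_filter, Finset.mem_univ, true_and] at hi ⊢
        exact hj i ((mem_col n i (j i) g).2 hi)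
      have hcU : ∀ g ∈ U, 1 ≤ c g := by
        intro g hg
        rw [Finset.mem_biUnion] at hg
        obtain ⟨i, _, hgi⟩ := hg
        rw [hc]
        exact Finset.card_pos.2 ⟨i, by simp [hgi]⟩
      have hsumk : ∑ g : Fin n → Fin n, k g = n ^ n := by
        have : ∀ g : Fin n → Fin n, k g = ∑ i : Fin n, if g i = j i then 1 else 0 := fun g =>
          Finset.card_filter _ _
        rw [Finset.sum_congr rfl fun g _ => this g, Finset.sum_comm]
        have : ∀ i : Fin n, (∑ g : Fin n → Fin n, if g i = j i then 1 else 0) = n ^ (n - 1) := by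
          intro i
          rw [← Finset.card_filter]
          exact col_card n hn i (j i)
        rw [Finset.sum_congr rfl fun i _ => this i, Finset.sum_const, Finset.card_univ,
          Fintype.card_fin, smul_eq_mul, ← pow_succ']
        congr 1
        omega
      -- pointwise : 1_{U∩Z} + k g ≤ c g
      have hpoint : ∀ g : Fin n → Fin n, (if g ∈ U ∩ Z then 1 else 0) + k g ≤ c g := by
        intro g
        by_cases hgZ : g ∈ Z
        · have hk0 : k g = 0 := by
            rw [hk, Finset.card_eq_zero, Finset.filter_eq_empty_iff]
            intro i _
            exact (Finset.mem_filter.1 hgZ).2 i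
          by_cases hgU : g ∈ U
          · rw [if_pos (Finset.mem_inter.2 ⟨hgU, hgZ⟩), hk0]
            exact hcU g hgU
          · rw [if_neg (fun h => hgU (Finset.mem_inter.1 h).1), hk0]
            simp
        · rw [if_neg (fun h => hgZ (Finset.mem_inter.1 h).2), zero_add]
          exact hck g
      have hbig : Finset.card (U ∩ Z) + n ^ n ≤ ∑ g : Fin n → Fin n, c g := by
        calc Finset.card (U ∩ Z) + n ^ n
            = ∑ g : Fin n → Fin n, ((if g ∈ U ∩ Z then 1 else 0) + k g) := by
              rw [Finset.sum_add_distrib, ← Finset.card_filter, hsumk,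
                Finset.filter_mem_eq_inter, Finset.univ_inter]
          _ ≤ ∑ g : Fin n → Fin n, c g := Finset.sum_le_sum fun g _ => hpoint g
      have hUZ : U.card + Z.card ≤ n ^ n + (U ∩ Z).card := by
        rw [← Finset.card_union_add_card_inter]
        have : (U ∪ Z).card ≤ n ^ n := hcG ▸ Finset.card_le_univ _
        omega
      have hZcard : Z.card = (n - 1) ^ n := zset_card n j
      rw [hsum]
      omega
    · refine ⟨j, fun i => hj i ?_⟩
      exact (mem_col n i (j i) j).2 rfl
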